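/- Assume the consistency predicate is closed under binary unions of subsets of D and C ∅ holds, and Q has the image property with image family I. Then Q is AR-entailed (equivalently IAR-entailed) by D if and only if there exists M ∈ I with ↑M ⊆ D such that for every α ∈ M the singleton {α} is weakly consistent with D. -/

import Mathlib

def IsRepair {F : Type} (C : Set F → Prop) (D : Finset F) (R : Set F) : Prop :=
  R ⊆ ↑D ∧ C R ∧ ∀ R' : Set F, R ⊆ R' → R' ⊆ ↑D → C R' → R' = R

def WeaklyConsistent {F : Type} (C : Set F → Prop) (D : Finset F) (X : Set F) : Prop :=
  ∃ X' : Set F, X ⊆ X' ∧ X' ⊆ ↑D ∧ C X'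

theorem stmt_13_aux {F : Type} (D : Finset F) (C : Set F → Prop) (hC : C ∅)
    (hunion : ∀ D₁ D₂ : Set F, D₁ ⊆ ↑D → D₂ ⊆ ↑D → C D₁ → C D₂ → C (D₁ ∪ D₂))
    (T : Set (Set F)) (hT : T.Finite) (hmem : ∀ X ∈ T, X ⊆ ↑D ∧ C X) :
    ⋃₀ T ⊆ ↑D ∧ C (⋃₀ T) := by
  refine Set.Finite.induction_on_subset (motive := fun s _ => ⋃₀ s ⊆ ↑D ∧ C (⋃₀ s)) T hT ?_ ?_
  · exact ⟨by simp, by simpa using hC⟩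
  · rintro a s haT _ _ ⟨h1, h2⟩
    have ha' := hmem a haT
    rw [Set.sUnion_insert]
    exact ⟨Set.union_subset ha'.1 h1, hunion _ _ ha'.1 h1 ha'.2 h2⟩

theorem stmt_13 {F : Type} (D : Finset F) (C : Set F → Prop) (hC : C ∅)
    (hunion : ∀ D₁ D₂ : Set F, D₁ ⊆ ↑D → D₂ ⊆ ↑D → C D₁ → C D₂ → C (D₁ ∪ D₂))
    (Q : Set F → Prop) (I : Set (Finset F))
    (hQ : ∀ X : Set F, Q X ↔ ∃ M ∈ I, ↑M ⊆ X) :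
    (∀ R : Set F, IsRepair C D R → Q R) ↔
      ∃ M ∈ I, ↑M ⊆ (↑D : Set F) ∧ ∀ α ∈ M, WeaklyConsistent C D {α} := by
  constructor
  · intro h
    set S : Set (Set F) := {X : Set F | X ⊆ ↑D ∧ C X} with hS
    have hfin : S.Finite := D.finite_toSet.finite_subsets.subset fun X hX => hX.1
    obtain ⟨hU1, hU2⟩ := stmt_13_aux D C hC hunion S hfin (fun X hX => hX)
    have hrep : IsRepair C D (⋃₀ S) := by
      refine ⟨hU1, hU2, fun R' hsub hsub' hC' => ?_⟩
      exact le_antisymm (Set.subset_sUnion_of_mem ⟨hsub', hC'⟩) hsub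
    obtain ⟨M, hM, hMsub⟩ := (hQ _).mp (h _ hrep)
    exact ⟨M, hM, hMsub.trans hU1, fun α hα =>
      ⟨⋃₀ S, by simpa using hMsub (by simpa using hα), hU1, hU2⟩⟩
  · rintro ⟨M, hM, hMD, hw⟩ R ⟨hRD, hRC, hmax⟩
    refine (hQ R).mpr ⟨M, hM, fun α hα => ?_⟩
    simp only [Finset.mem_coe] at hα
    obtain ⟨X', hαX, hXD, hXC⟩ := hw α hα
    have := hmax (R ∪ X') Set.subset_union_left (Set.union_subset hRD hXD)
      (hunion _ _ hRD hXD hRC hXC)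
    have : α ∈ R ∪ X' := Or.inr (hαX rfl)
    rwa [hmax (R ∪ X') Set.subset_union_left (Set.union_subset hRD hXD)
      (hunion _ _ hRD hXD hRC hXC)] at this
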